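/- Let q ≥ 3 be an integer, N = (q−2)/2 if q is even and N = q−2 if q is odd, and let τ : {0,…,N} → {1,…,q−1} be defined by τ(k) = q−1−2k if q is even; and if q is odd, τ(k) = q−1−2k for 0 ≤ k ≤ (N−1)/2 and τ(k) = 2q−3−2k for (N+1)/2 ≤ k ≤ N. Let σ : ℕ → ℤ and let c_n^j (n ≥ 0, 1 ≤ j ≤ q−1) be integers satisfying: c_0^j = 0 for 1 ≤ j ≤ q−2 and c_0^{q−1} = σ_1; and for all n ≥ 1: c_n^l = c_{n−1}^{l+2} for 1 ≤ l ≤ q−3, c_n^{q−2} = c_{n−1}^2, and c_n^{q−1} = c_n^1 + σ_{n+1} − σ_n. Then for every n with 1 ≤ n ≤ N: c_n^{τ(l)} = σ_{n+1−l} − σ_{n−l} for 1 ≤ l ≤ n−1; c_n^{τ(n)} = σ_1; and c_n^{τ(l)} = 0 for n+1 ≤ l ≤ N. Moreover, if q is even, then c_n^{2l} = 0 for 1 ≤ l ≤ N and 1 ≤ n ≤ N. -/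
import Mathlib


/-- STATEMENT 8 (the paper's Lemma 3.1), stated for abstract integer sequences satisfying the
recurrence relations (i)–(iii) of the face-counting quantities `c n j` of a `q`-face regular
plane tessellation without cut locus. -/
theorem cn_tau_values (q : ℕ) (hq : 3 ≤ q)
    (N : ℕ) (hN : N = if Even q then (q - 2) / 2 else q - 2)
    (τ : ℕ → ℕ)
    (hτ : ∀ k, k ≤ N →
      τ k = if Even q ∨ k ≤ (N - 1) / 2 then q - 1 - 2 * k else 2 * q - 3 - 2 * k)
    (σ : ℕ → ℤ) (c : ℕ → ℕ → ℤ)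
    (hc0 : ∀ j, 1 ≤ j → j ≤ q - 2 → c 0 j = 0)
    (hc0' : c 0 (q - 1) = σ 1)
    (hrec1 : ∀ n, 1 ≤ n → ∀ l, 1 ≤ l → l ≤ q - 3 → c n l = c (n - 1) (l + 2))
    (hrec2 : ∀ n, 1 ≤ n → c n (q - 2) = c (n - 1) 2)
    (hrec3 : ∀ n, 1 ≤ n → c n (q - 1) = c n 1 + σ (n + 1) - σ n)
    (n : ℕ) (hn1 : 1 ≤ n) (hnN : n ≤ N) :
    (∀ l, 1 ≤ l → l ≤ n - 1 → c n (τ l) = σ (n + 1 - l) - σ (n - l)) ∧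
    c n (τ n) = σ 1 ∧
    (∀ l, n + 1 ≤ l → l ≤ N → c n (τ l) = 0) ∧
    (Even q → ∀ l, 1 ≤ l → l ≤ N → c n (2 * l) = 0) := by
  have hN1 : 1 ≤ N := le_trans hn1 hnN
  -- basic values of τ
  have hτ0 : τ 0 = q - 1 := by
    rw [hτ 0 (Nat.zero_le _), if_pos (Or.inr (Nat.zero_le _))]
    omega
  have hτN : τ N = 1 := by
    have h := hτ N le_rfl
    rcases Nat.even_or_odd q with hpar | hpar
    · have hq2 := Nat.even_iff.mp hpar
      have hNv : N = (q - 2) / 2 := by rw [hN, if_pos hpar]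
      rw [if_pos (Or.inl hpar)] at h
      omega
    · have hq2 := Nat.odd_iff.mp hpar
      have hpar' : ¬ Even q := Nat.not_even_iff_odd.mpr hpar
      have hNv : N = q - 2 := by rw [hN, if_neg hpar']
      by_cases hc1 : N ≤ (N - 1) / 2
      · omega
      · rw [if_neg (by tauto)] at h; omega
  -- bounds on τ
  have τbound : ∀ k, 1 ≤ k → k ≤ N → 1 ≤ τ k ∧ τ k ≤ q - 2 := by
    intro k hk hkN
    have h := hτ k hkN
    rcases Nat.even_or_odd q with hpar | hpar
    · have hq2 := Nat.even_iff.mp hpar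
      have hNv : N = (q - 2) / 2 := by rw [hN, if_pos hpar]
      rw [if_pos (Or.inl hpar)] at h
      omega
    · have hq2 := Nat.odd_iff.mp hpar
      have hpar' : ¬ Even q := Nat.not_even_iff_odd.mpr hpar
      have hNv : N = q - 2 := by rw [hN, if_neg hpar']
      by_cases hc1 : k ≤ (N - 1) / 2
      · rw [if_pos (Or.inr hc1)] at h; omega
      · rw [if_neg (by tauto)] at h; omega
  -- key shift lemma
  have shift : ∀ m, 1 ≤ m → ∀ l, 1 ≤ l → l ≤ N → c m (τ l) = c (m - 1) (τ (l - 1)) := by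
    intro m hm l hl hlN
    have htl := hτ l hlN
    have htl' := hτ (l - 1) (by omega)
    rcases Nat.even_or_odd q with hpar | hpar
    · have hq2 := Nat.even_iff.mp hpar
      have hNv : N = (q - 2) / 2 := by rw [hN, if_pos hpar]
      rw [if_pos (Or.inl hpar)] at htl htl'
      have h2 : 1 ≤ τ l := by omega
      have h3 : τ l ≤ q - 3 := by omega
      rw [hrec1 m hm (τ l) h2 h3]
      congr 1
      omega
    · have hq2 := Nat.odd_iff.mp hpar
      have hpar' : ¬ Even q := Nat.not_even_iff_odd.mpr hpar
      have hNv : N = q - 2 := by rw [hN, if_neg hpar']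
      by_cases hc1 : l ≤ (N - 1) / 2
      · rw [if_pos (Or.inr hc1)] at htl
        rw [if_pos (Or.inr (by omega))] at htl'
        have h2 : 1 ≤ τ l := by omega
        have h3 : τ l ≤ q - 3 := by omega
        rw [hrec1 m hm (τ l) h2 h3]
        congr 1
        omega
      · by_cases hc2 : l - 1 ≤ (N - 1) / 2
        · -- boundary case: τ l = q - 2, τ (l-1) = 2
          rw [if_neg (by tauto)] at htl
          rw [if_pos (Or.inr hc2)] at htl'
          have h1 : τ l = q - 2 := by omega
          have h2 : τ (l - 1) = 2 := by omega
          rw [h1, hrec2 m hm, h2]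
        · rw [if_neg (by tauto)] at htl
          rw [if_neg (by tauto)] at htl'
          have h2 : 1 ≤ τ l := by omega
          have h3 : τ l ≤ q - 3 := by omega
          rw [hrec1 m hm (τ l) h2 h3]
          congr 1
          omega
  -- the even part
  have evenpart : Even q → ∀ m, ∀ l, 1 ≤ l → l ≤ N → c m (2 * l) = 0 := by
    intro hpar
    have hq2 := Nat.even_iff.mp hpar
    have hNv : N = (q - 2) / 2 := by rw [hN, if_pos hpar]
    intro m
    induction m with
    | zero =>
      intro l hl hlN
      exact hc0 (2 * l) (by omega) (by omega)
    | succ m ih =>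
      intro l hl hlN
      by_cases h : l = N
      · have h1 : 2 * l = q - 2 := by omega
        rw [h1, hrec2 (m + 1) (by omega)]
        simp only [Nat.add_sub_cancel]
        have h2 := ih 1 le_rfl (by omega)
        simpa using h2
      · rw [hrec1 (m + 1) (by omega) (2 * l) (by omega) (by omega)]
        have h2 : 2 * l + 2 = 2 * (l + 1) := by ring
        simp only [Nat.add_sub_cancel]
        rw [h2]
        exact ih (l + 1) (by omega) (by omega)
  -- strengthened main induction
  have main : ∀ m, 1 ≤ m → m ≤ N →
      (∀ l, 1 ≤ l → l ≤ m - 1 → c m (τ l) = σ (m + 1 - l) - σ (m - l)) ∧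
      c m (τ m) = σ 1 ∧
      (∀ l, m + 1 ≤ l → l ≤ N → c m (τ l) = 0) ∧
      (m + 1 ≤ N → c m (τ 0) = σ (m + 1) - σ m) := by
    intro m hm
    induction m, hm using Nat.le_induction with
    | base =>
      intro h1N
      refine ⟨?_, ?_, ?_, ?_⟩
      · intro l hl hl'; omega
      · have h := shift 1 le_rfl 1 le_rfl h1N
        simp only [Nat.sub_self] at h
        rw [h, hτ0, hc0']
      · intro l hl hlN
        have h := shift 1 le_rfl l (by omega) hlN
        simp only [Nat.sub_self] at h
        rw [h]
        obtain ⟨hb1, hb2⟩ := τbound (l - 1) (by omega) (by omega)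
        exact hc0 (τ (l - 1)) hb1 hb2
      · intro h2N
        rw [hτ0, hrec3 1 le_rfl]
        have h1 : c 1 1 = 0 := by
          have h := shift 1 le_rfl N (by omega) le_rfl
          simp only [Nat.sub_self] at h
          rw [hτN] at h
          rw [h]
          obtain ⟨hb1, hb2⟩ := τbound (N - 1) (by omega) (by omega)
          exact hc0 (τ (N - 1)) hb1 hb2
        rw [h1]; ring
    | succ m hm ih =>
      intro hmN
      obtain ⟨ih1, ih2, ih3, ih4⟩ := ih (by omega)
      refine ⟨?_, ?_, ?_, ?_⟩
      · intro l hl hl'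
        have h := shift (m + 1) (by omega) l hl (by omega)
        simp only [Nat.add_sub_cancel] at h
        rw [h]
        by_cases hl1 : l = 1
        · subst hl1
          simp only [Nat.sub_self]
          rw [ih4 (by omega)]
          have e1 : m + 1 + 1 - 1 = m + 1 := by omega
          have e2 : m + 1 - 1 = m := by omega
          rw [e1, e2]
        · rw [ih1 (l - 1) (by omega) (by omega)]
          have e1 : m + 1 - (l - 1) = m + 1 + 1 - l := by omega
          have e2 : m - (l - 1) = m + 1 - l := by omega
          rw [e1, e2]
      · have h := shift (m + 1) (by omega) (m + 1) (by omega) hmN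
        simp only [Nat.add_sub_cancel] at h
        rw [h, ih2]
      · intro l hl hlN
        have h := shift (m + 1) (by omega) l (by omega) hlN
        simp only [Nat.add_sub_cancel] at h
        rw [h]
        exact ih3 (l - 1) (by omega) (by omega)
      · intro h2N
        rw [hτ0, hrec3 (m + 1) (by omega)]
        have h1 : c (m + 1) 1 = 0 := by
          have h := shift (m + 1) (by omega) N (by omega) le_rfl
          simp only [Nat.add_sub_cancel] at h
          rw [hτN] at h
          rw [h]
          exact ih3 (N - 1) (by omega) (by omega)
        rw [h1]; ring
  obtain ⟨h1, h2, h3, _⟩ := main n hn1 hnN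
  exact ⟨h1, h2, h3, fun hpar l hl hlN => evenpart hpar n l hl hlN⟩
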